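/- For every integer n ≥ 1 and every x, q_n(x) = Σ_{k=0}^{⌊n/2⌋} 4^k · b(n,k) · (x^2 − 1)^k · (2x)^{n−2k}, where b(n,k) is the number of permutations of {1,…,n} with exactly k left peaks. -/

import Mathlib

open Polynomial Finset

/-- The alternating derivative polynomials for tangent: `p 0 = X`,
`p (n+1) = (X^2 - 1) * (p n)'`. -/
noncomputable def p : ℕ → Polynomial ℝ
  | 0 => X
  | n + 1 => (X ^ 2 - 1) * derivative (p n)

/-- The alternating derivative polynomials for secant: `q 0 = 1`,
`q (n+1) = 2(X^2 - 1) * (q n)' + 2X * q n`. -/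
noncomputable def q : ℕ → Polynomial ℝ
  | 0 => 1
  | n + 1 => 2 * (X ^ 2 - 1) * derivative (q n) + 2 * X * q n

/-- The word of a permutation `π` of `{1, …, n}` extended by the boundary
convention `w 0 = w (n+1) = 0`: for `1 ≤ i ≤ n`, `w i = π i` (as a value in
`{1, …, n}`), and `w i = 0` otherwise. -/
def wval (n : ℕ) (π : Equiv.Perm (Fin n)) (i : ℕ) : ℕ :=
  if h : 1 ≤ i ∧ i ≤ n then ((π ⟨i - 1, by omega⟩ : Fin n) : ℕ) + 1 else 0

/-- `b n k` is the number of permutations of `{1, …, n}` with exactly `k` left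
peaks, i.e. indices `i ∈ {1, …, n-1}` with `π (i-1) < π i > π (i+1)`, where
`π 0 = 0`. -/
noncomputable def b (n k : ℕ) : ℕ :=
  Finset.card <| Finset.univ.filter fun π : Equiv.Perm (Fin n) =>
    ((Finset.Icc 1 (n - 1)).filter fun i =>
        wval n π (i - 1) < wval n π i ∧ wval n π (i + 1) < wval n π i).card = k

lemma wval_le (n : ℕ) (π : Equiv.Perm (Fin n)) (i : ℕ) : wval n π i ≤ n := by
  unfold wval; split
  · exact (π _).isLt
  · omega

lemma wval_eq_zero (n : ℕ) (π : Equiv.Perm (Fin n)) (i : ℕ) (h : i = 0 ∨ n < i) :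
    wval n π i = 0 := by
  unfold wval; rw [dif_neg]; omega

def insPerm (n : ℕ) (σ : Equiv.Perm (Fin n)) (p : Fin (n+1)) : Equiv.Perm (Fin (n+1)) :=
  ((finSuccEquiv' p).trans (Equiv.optionCongr σ)).trans (finSuccEquiv' (Fin.last n)).symm

lemma insPerm_apply_self (n : ℕ) (σ : Equiv.Perm (Fin n)) (p : Fin (n+1)) :
    insPerm n σ p p = Fin.last n := by
  simp [insPerm]

lemma insPerm_apply_succAbove (n : ℕ) (σ : Equiv.Perm (Fin n)) (p : Fin (n+1)) (i : Fin n) :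
    insPerm n σ p (p.succAbove i) = (σ i).castSucc := by
  simp [insPerm, Fin.succAbove_last]

lemma wval_insPerm (n : ℕ) (σ : Equiv.Perm (Fin n)) (p : Fin (n+1)) (i : ℕ) :
    wval (n+1) (insPerm n σ p) i =
      if i < (p:ℕ)+1 then wval n σ i
      else if i = (p:ℕ)+1 then n+1 else wval n σ (i-1) := by
  rcases Nat.eq_zero_or_pos i with h0 | h1
  · subst h0
    rw [wval_eq_zero _ _ _ (Or.inl rfl), if_pos (by omega), wval_eq_zero _ _ _ (Or.inl rfl)]
  by_cases hle : i ≤ n+1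
  · -- 1 ≤ i ≤ n+1
    by_cases hlt : i < (p:ℕ)+1
    · -- i - 1 < p
      rw [if_pos hlt]
      have hin : i ≤ n := by omega
      have hi1 : i - 1 < n := by omega
      have hsa : (⟨i-1, by omega⟩ : Fin (n+1)) = p.succAbove ⟨i-1, hi1⟩ := by
        rw [Fin.succAbove_of_castSucc_lt]
        · rfl
        · simp [Fin.lt_def]; omega
      unfold wval
      rw [dif_pos ⟨h1, by omega⟩, dif_pos ⟨h1, hin⟩]
      rw [hsa, insPerm_apply_succAbove]
      simp
    · by_cases heq : i = (p:ℕ)+1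
      · rw [if_neg hlt, if_pos heq]
        unfold wval
        rw [dif_pos ⟨h1, hle⟩]
        have : (⟨i-1, by omega⟩ : Fin (n+1)) = p := by
          apply Fin.ext; simp; omega
        rw [this, insPerm_apply_self]
        simp [Fin.last]
      · -- i - 1 > p
        rw [if_neg hlt, if_neg heq]
        have hq : (p:ℕ)+1 < i := by omega
        have hi2 : i - 2 < n := by have := p.isLt; omega
        have hsa : (⟨i-1, by omega⟩ : Fin (n+1)) = p.succAbove ⟨i-2, hi2⟩ := by
          rw [Fin.succAbove_of_le_castSucc]
          · apply Fin.ext; simp [Fin.succ]; omega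
          · simp [Fin.le_def]; omega
        unfold wval
        rw [dif_pos ⟨h1, hle⟩, dif_pos ⟨by omega, by omega⟩]
        rw [hsa, insPerm_apply_succAbove]
        have : i - 1 - 1 = i - 2 := by omega
        simp [this]
  · rw [wval_eq_zero _ _ _ (Or.inr (by omega)), if_neg (by have := p.isLt; omega),
      if_neg (by have := p.isLt; omega), wval_eq_zero _ _ _ (Or.inr (by omega))]

lemma insPerm_injective (n : ℕ) :
    Function.Injective (fun x : Equiv.Perm (Fin n) × Fin (n+1) => insPerm n x.1 x.2) := by
  rintro ⟨σ, p⟩ ⟨σ', p'⟩ h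
  simp only at h
  have hp : p = p' := by
    have h1 : insPerm n σ' p' p = Fin.last n := by rw [← h, insPerm_apply_self]
    have h2 : insPerm n σ' p' p' = Fin.last n := insPerm_apply_self n σ' p'
    exact (insPerm n σ' p').injective (h1.trans h2.symm)
  subst hp
  have hσ : σ = σ' := by
    ext i
    have h1 : insPerm n σ p (p.succAbove i) = insPerm n σ' p (p.succAbove i) := by rw [h]
    rw [insPerm_apply_succAbove, insPerm_apply_succAbove] at h1
    have := Fin.castSucc_injective n h1
    exact congrArg Fin.val this
  simp [hσ]

lemma insPerm_bijective (n : ℕ) :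
    Function.Bijective (fun x : Equiv.Perm (Fin n) × Fin (n+1) => insPerm n x.1 x.2) := by
  rw [Fintype.bijective_iff_injective_and_card]
  refine ⟨insPerm_injective n, ?_⟩
  simp [Fintype.card_perm, Nat.factorial_succ, Nat.mul_comm]

lemma card_filter_insPerm (n : ℕ) (P : Equiv.Perm (Fin (n+1)) → Prop) [DecidablePred P] :
    (Finset.univ.filter P).card
      = ∑ σ : Equiv.Perm (Fin n), (Finset.univ.filter fun p : Fin (n+1) => P (insPerm n σ p)).card := by
  have h1 : (Finset.univ.filter P).card
      = (Finset.univ.filter fun x : Equiv.Perm (Fin n) × Fin (n+1) => P (insPerm n x.1 x.2)).card := by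
    symm
    apply Finset.card_bij (fun x _ => insPerm n x.1 x.2)
    · intro a ha
      simp only [Finset.mem_filter, Finset.mem_univ, true_and] at ha ⊢
      exact ha
    · intro a₁ _ a₂ _ h
      exact insPerm_injective n h
    · intro π hπ
      simp only [Finset.mem_filter, Finset.mem_univ, true_and] at hπ
      obtain ⟨x, hx⟩ := (insPerm_bijective n).surjective π
      exact ⟨x, by simp [Finset.mem_filter, hx, hπ], hx⟩
  rw [h1, Finset.card_filter]
  rw [Fintype.sum_prod_type]
  congr 1
  ext σ
  rw [Finset.card_filter]

def pkset (n : ℕ) (w : ℕ → ℕ) : Finset ℕ :=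
  (Finset.Icc 1 (n-1)).filter (fun i => w (i-1) < w i ∧ w (i+1) < w i)

lemma not_adj_pkset (n : ℕ) (w : ℕ → ℕ) (i : ℕ) (h : i ∈ pkset n w) :
    i + 1 ∉ pkset n w := by
  simp only [pkset, Finset.mem_filter, Finset.mem_Icc] at h ⊢
  rintro ⟨_, h2, _⟩
  have : i + 1 - 1 = i := by omega
  rw [this] at h2
  omega

lemma pkset_card_le (n : ℕ) (w : ℕ → ℕ) : (pkset n w).card ≤ n / 2 := by
  have : (pkset n w).card ≤ (Finset.range (n/2)).card := by
    apply Finset.card_le_card_of_injOn (fun i => (i - 1) / 2)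
    · intro i hi
      simp only [pkset, Finset.mem_coe, Finset.mem_filter, Finset.mem_Icc] at hi
      simp only [Finset.mem_coe, Finset.mem_range]
      omega
    · intro i hi j hj hij
      simp only at hij
      simp only [Finset.coe_filter, Set.mem_setOf_eq, pkset, Finset.mem_Icc] at hi hj
      by_contra hne
      rcases Nat.lt_or_ge i j with h | h
      · rcases Nat.eq_or_lt_of_le h with h' | h'
        · exact absurd (by simp [pkset, Finset.mem_filter, Finset.mem_Icc]; exact ⟨⟨hj.1.1, hj.1.2⟩, hj.2⟩ : j ∈ pkset n w)
            (h' ▸ not_adj_pkset n w i (by simp [pkset, Finset.mem_filter, Finset.mem_Icc]; exact ⟨⟨hi.1.1, hi.1.2⟩, hi.2⟩))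
        · omega
      · rcases Nat.eq_or_lt_of_le h with h' | h'
        · omega
        · rcases Nat.eq_or_lt_of_le h' with h'' | h''
          · exact absurd (by simp [pkset, Finset.mem_filter, Finset.mem_Icc]; exact ⟨⟨hi.1.1, hi.1.2⟩, hi.2⟩ : i ∈ pkset n w)
              (h'' ▸ not_adj_pkset n w j (by simp [pkset, Finset.mem_filter, Finset.mem_Icc]; exact ⟨⟨hj.1.1, hj.1.2⟩, hj.2⟩))
          · omega
  simpa using this

lemma pkset_ins (n : ℕ) (σ : Equiv.Perm (Fin n)) (p : Fin (n+1)) :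
    pkset (n+1) (wval (n+1) (insPerm n σ p)) =
      ((pkset n (wval n σ)).filter (fun i => i + 2 ≤ (p:ℕ)+1))
        ∪ ((pkset n (wval n σ)).filter (fun i => (p:ℕ)+2 ≤ i)).image (· + 1)
        ∪ (Finset.Icc 1 n).filter (fun i => i = (p:ℕ)+1) := by
  have hq2 : (p:ℕ) + 1 ≤ n+1 := by have := p.isLt; omega
  have K := wval_insPerm n σ p
  have WL := wval_le n σ
  have WL' := wval_le (n+1) (insPerm n σ p)
  ext i
  simp only [pkset, Finset.mem_union, Finset.mem_filter, Finset.mem_image, Finset.mem_Icc]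
  constructor
  · rintro ⟨⟨hi1, hi2⟩, hpk1, hpk2⟩
    have hi2' : i ≤ n := by omega
    rcases Nat.lt_or_ge (i+2) ((p:ℕ)+2) with hc | hc
    · -- i + 2 ≤ p + 1
      left; left
      have e1 : wval (n+1) (insPerm n σ p) (i-1) = wval n σ (i-1) := by
        rw [K]; rw [if_pos (by omega)]
      have e2 : wval (n+1) (insPerm n σ p) i = wval n σ i := by
        rw [K]; rw [if_pos (by omega)]
      have e3 : wval (n+1) (insPerm n σ p) (i+1) = wval n σ (i+1) := by
        rw [K]; rw [if_pos (by omega)]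
      exact ⟨⟨⟨hi1, by omega⟩, by omega, by omega⟩, by omega⟩
    · rcases Nat.lt_or_ge i ((p:ℕ)+1) with hc2 | hc2
      · -- i + 1 = p + 1 : impossible
        exfalso
        have e3 : wval (n+1) (insPerm n σ p) (i+1) = n+1 := by
          rw [K]; rw [if_neg (by omega), if_pos (by omega)]
        have e2 := WL' i
        omega
      · rcases Nat.eq_or_lt_of_le hc2 with hc3 | hc3
        · right; exact ⟨⟨hi1, hi2'⟩, by omega⟩
        · rcases Nat.eq_or_lt_of_le (show (p:ℕ)+2 ≤ i by omega) with hc4 | hc4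
          · -- i = p + 2 : impossible
            exfalso
            have e1 : wval (n+1) (insPerm n σ p) (i-1) = n+1 := by
              rw [K]; rw [if_neg (by omega), if_pos (by omega)]
            have e2 := WL' i
            omega
          · -- i ≥ p + 3
            left; right
            refine ⟨i - 1, ⟨⟨⟨by omega, by omega⟩, ?_, ?_⟩, by omega⟩, by omega⟩
            · have e1 : wval (n+1) (insPerm n σ p) (i-1) = wval n σ (i-1-1) := by
                rw [K]; rw [if_neg (by omega), if_neg (by omega)]
              have e2 : wval (n+1) (insPerm n σ p) i = wval n σ (i-1) := by
                rw [K]; rw [if_neg (by omega), if_neg (by omega)]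
              omega
            · have e2 : wval (n+1) (insPerm n σ p) i = wval n σ (i-1) := by
                rw [K]; rw [if_neg (by omega), if_neg (by omega)]
              have e3 : wval (n+1) (insPerm n σ p) (i+1) = wval n σ (i+1-1) := by
                rw [K]; rw [if_neg (by omega), if_neg (by omega)]
              have eb : wval n σ (i-1+1) = wval n σ (i+1-1) := by congr 1; omega
              omega
  · rintro ((⟨⟨⟨hi1, hi2⟩, hpk1, hpk2⟩, hc⟩ | ⟨a, ⟨⟨⟨ha1, ha2⟩, hpk1, hpk2⟩, hc⟩, rfl⟩) | ⟨⟨hi1, hi2⟩, rfl⟩)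
    · have e1 : wval (n+1) (insPerm n σ p) (i-1) = wval n σ (i-1) := by
        rw [K]; rw [if_pos (by omega)]
      have e2 : wval (n+1) (insPerm n σ p) i = wval n σ i := by
        rw [K]; rw [if_pos (by omega)]
      have e3 : wval (n+1) (insPerm n σ p) (i+1) = wval n σ (i+1) := by
        rw [K]; rw [if_pos (by omega)]
      exact ⟨⟨hi1, by omega⟩, by omega, by omega⟩
    · -- i = a + 1, a ≥ p + 2
      have e1 : wval (n+1) (insPerm n σ p) (a+1-1) = wval n σ (a+1-1-1) := by
        rw [K]; rw [if_neg (by omega), if_neg (by omega)]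
      have eb1 : wval n σ (a+1-1-1) = wval n σ (a-1) := by simp
      have e2 : wval (n+1) (insPerm n σ p) (a+1) = wval n σ (a+1-1) := by
        rw [K]; rw [if_neg (by omega), if_neg (by omega)]
      have eb2 : wval n σ (a+1-1) = wval n σ a := by simp
      have e3 : wval (n+1) (insPerm n σ p) (a+1+1) = wval n σ (a+1+1-1) := by
        rw [K]; rw [if_neg (by omega), if_neg (by omega)]
      have eb3 : wval n σ (a+1+1-1) = wval n σ (a+1) := by simp
      exact ⟨⟨by omega, by omega⟩, by omega, by omega⟩
    · -- i = p + 1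
      have e2 : wval (n+1) (insPerm n σ p) ((p:ℕ)+1) = n+1 := by
        rw [K]; rw [if_neg (by omega), if_pos rfl]
      have e1 := WL' ((p:ℕ)+1-1)
      have e3 := WL' ((p:ℕ)+1+1)
      have e1' : wval (n+1) (insPerm n σ p) ((p:ℕ)+1-1) ≤ n := by
        rw [K]; rw [if_pos (by omega)]; exact WL _
      have e3' : wval (n+1) (insPerm n σ p) ((p:ℕ)+1+1) ≤ n := by
        rw [K]; rw [if_neg (by omega), if_neg (by omega)]; exact WL _
      exact ⟨⟨hi1, hi2⟩, by omega, by omega⟩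

lemma card_M (n : ℕ) (w : ℕ → ℕ) (m : ℕ) :
    ((pkset n w).filter (fun i => i = m ∨ i = m+1)).card
      = if (m ∈ pkset n w ∨ m+1 ∈ pkset n w) then 1 else 0 := by
  rw [Finset.filter_or, Finset.filter_eq', Finset.filter_eq']
  by_cases h1 : m ∈ pkset n w
  · have h2 : m+1 ∉ pkset n w := not_adj_pkset n w m h1
    simp [h1, h2]
  · by_cases h2 : m+1 ∈ pkset n w
    · simp [h1, h2]
    · simp [h1, h2]

lemma mem_pkset_bounds (n : ℕ) (w : ℕ → ℕ) (i : ℕ) (h : i ∈ pkset n w) :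
    1 ≤ i ∧ i ≤ n - 1 := by
  simp only [pkset, Finset.mem_filter, Finset.mem_Icc] at h
  exact h.1

lemma pkcount_ins (n : ℕ) (σ : Equiv.Perm (Fin n)) (p : Fin (n+1)) :
    (pkset (n+1) (wval (n+1) (insPerm n σ p))).card
      = (pkset n (wval n σ)).card +
        (if ((p:ℕ) = n ∨ (p:ℕ) ∈ pkset n (wval n σ) ∨ (p:ℕ)+1 ∈ pkset n (wval n σ))
          then 0 else 1) := by
  classical
  have hplt := p.isLt
  -- card of the singleton part
  have hC : ((Finset.Icc 1 n).filter (fun i => i = (p:ℕ)+1)).card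
      = if (p:ℕ) = n then 0 else 1 := by
    rw [Finset.filter_eq']
    by_cases hpn : (p:ℕ) = n
    · rw [if_neg (by simp only [Finset.mem_Icc]; omega), if_pos hpn]
      exact Finset.card_empty
    · rw [if_pos (by simp only [Finset.mem_Icc]; omega), if_neg hpn]
      exact Finset.card_singleton _
  -- card of new pkset
  have h1 : (pkset (n+1) (wval (n+1) (insPerm n σ p))).card
      = ((pkset n (wval n σ)).filter (fun i => i + 2 ≤ (p:ℕ)+1)).card
        + ((pkset n (wval n σ)).filter (fun i => (p:ℕ)+2 ≤ i)).card
        + (if (p:ℕ) = n then 0 else 1) := by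
    rw [pkset_ins]
    rw [Finset.card_union_of_disjoint, Finset.card_union_of_disjoint]
    · rw [hC, Finset.card_image_of_injective _ (add_left_injective 1)]
    · rw [Finset.disjoint_left]
      intro a ha hb
      simp only [Finset.mem_filter, Finset.mem_image] at ha hb
      obtain ⟨c, hc, rfl⟩ := hb
      omega
    · rw [Finset.disjoint_left]
      intro a ha hb
      simp only [Finset.mem_union, Finset.mem_filter, Finset.mem_image, Finset.mem_Icc] at ha hb
      rcases ha with ha | ⟨c, hc, rfl⟩
      · omega
      · omega
  -- card of old pkset
  have hsplit : ((pkset n (wval n σ)).filter (fun i => i + 2 ≤ (p:ℕ)+1)).card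
      + ((pkset n (wval n σ)).filter (fun i => ¬(i + 2 ≤ (p:ℕ)+1))).card
      = (pkset n (wval n σ)).card :=
    Finset.card_filter_add_card_filter_not _
  have e0 : (pkset n (wval n σ)).filter (fun i => ¬(i + 2 ≤ (p:ℕ)+1))
      = ((pkset n (wval n σ)).filter (fun i => i = (p:ℕ) ∨ i = (p:ℕ)+1))
        ∪ ((pkset n (wval n σ)).filter (fun i => (p:ℕ)+2 ≤ i)) := by
    rw [← Finset.filter_or]
    apply Finset.filter_congr
    intro x _
    omega
  have hdisj : Disjoint ((pkset n (wval n σ)).filter (fun i => i = (p:ℕ) ∨ i = (p:ℕ)+1))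
      ((pkset n (wval n σ)).filter (fun i => (p:ℕ)+2 ≤ i)) := by
    rw [Finset.disjoint_left]
    intro a ha hb
    simp only [Finset.mem_filter] at ha hb
    omega
  rw [e0, Finset.card_union_of_disjoint hdisj] at hsplit
  have hM := card_M n (wval n σ) (p:ℕ)
  have hnp : (p:ℕ) = n → ¬((p:ℕ) ∈ pkset n (wval n σ) ∨ (p:ℕ)+1 ∈ pkset n (wval n σ)) := by
    intro hpn h
    rcases h with h | h
    · have := mem_pkset_bounds n _ _ h; omega
    · have := mem_pkset_bounds n _ _ h; omega
  by_cases hpn : (p:ℕ) = n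
  · have hm := hnp hpn
    rw [if_neg hm] at hM
    rw [if_pos (Or.inl hpn)]
    rw [if_pos hpn] at h1
    omega
  · by_cases hm : ((p:ℕ) ∈ pkset n (wval n σ) ∨ (p:ℕ)+1 ∈ pkset n (wval n σ))
    · rw [if_pos hm] at hM
      rw [if_pos (Or.inr hm)]
      rw [if_neg hpn] at h1
      omega
    · rw [if_neg hm] at hM
      rw [if_neg (by tauto)]
      rw [if_neg hpn] at h1
      omega

lemma card_cond (n : ℕ) (σ : Equiv.Perm (Fin n)) :
    (Finset.univ.filter fun pp : Fin (n+1) =>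
        ((pp:ℕ) = n ∨ (pp:ℕ) ∈ pkset n (wval n σ) ∨ (pp:ℕ)+1 ∈ pkset n (wval n σ))).card
      = 2 * (pkset n (wval n σ)).card + 1 := by
  classical
  set P := pkset n (wval n σ) with hP
  have h1 : (Finset.univ.filter fun pp : Fin (n+1) =>
        ((pp:ℕ) = n ∨ (pp:ℕ) ∈ P ∨ (pp:ℕ)+1 ∈ P)).card
      = ((Finset.range (n+1)).filter fun m => (m = n ∨ m ∈ P ∨ m+1 ∈ P)).card := by
    rw [Finset.card_filter, Finset.card_filter]
    exact Fin.sum_univ_eq_sum_range (fun m => if (m = n ∨ m ∈ P ∨ m+1 ∈ P) then 1 else 0) (n+1)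
  rw [h1]
  have h2 : ((Finset.range (n+1)).filter fun m => (m = n ∨ m ∈ P ∨ m+1 ∈ P))
      = ({n} ∪ P) ∪ P.image (· - 1) := by
    ext m
    simp only [Finset.mem_filter, Finset.mem_range, Finset.mem_union, Finset.mem_singleton,
      Finset.mem_image]
    constructor
    · rintro ⟨hm, h | h | h⟩
      · exact Or.inl (Or.inl h)
      · exact Or.inl (Or.inr h)
      · exact Or.inr ⟨m+1, h, by omega⟩
    · rintro ((rfl | h) | ⟨a, ha, rfl⟩)
      · exact ⟨by omega, Or.inl rfl⟩
      · have := mem_pkset_bounds n _ _ h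
        exact ⟨by omega, Or.inr (Or.inl h)⟩
      · have hb := mem_pkset_bounds n _ _ ha
        have : a - 1 + 1 = a := by omega
        exact ⟨by omega, Or.inr (Or.inr (by rw [this]; exact ha))⟩
  rw [h2]
  have hd1 : Disjoint ({n} : Finset ℕ) P := by
    rw [Finset.disjoint_left]
    intro a ha hb
    have := mem_pkset_bounds n _ _ hb
    simp only [Finset.mem_singleton] at ha
    omega
  have hd2 : Disjoint (({n} : Finset ℕ) ∪ P) (P.image (· - 1)) := by
    rw [Finset.disjoint_left]
    intro a ha hb
    simp only [Finset.mem_union, Finset.mem_singleton, Finset.mem_image] at ha hb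
    obtain ⟨c, hc, rfl⟩ := hb
    have hcb := mem_pkset_bounds n _ _ hc
    rcases ha with rfl | ha
    · omega
    · have : c - 1 + 1 = c := by omega
      exact not_adj_pkset n _ _ ha (by rw [this]; exact hc)
  rw [Finset.card_union_of_disjoint hd2, Finset.card_union_of_disjoint hd1]
  have himg : (P.image (· - 1)).card = P.card := by
    apply Finset.card_image_of_injOn
    intro a ha b hb hab
    have h1 := mem_pkset_bounds n _ _ ha
    have h2 := mem_pkset_bounds n _ _ hb
    simp only at hab
    omega
  rw [himg, Finset.card_singleton]
  omega

lemma fiber_card (n : ℕ) (σ : Equiv.Perm (Fin n)) (k : ℕ) :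
    (Finset.univ.filter fun pp : Fin (n+1) =>
        (pkset (n+1) (wval (n+1) (insPerm n σ pp))).card = k).card
      = (if k = (pkset n (wval n σ)).card then 2 * (pkset n (wval n σ)).card + 1
         else if k = (pkset n (wval n σ)).card + 1 then n - 2 * (pkset n (wval n σ)).card
         else 0) := by
  classical
  set j := (pkset n (wval n σ)).card with hj
  have hle : j ≤ n / 2 := pkset_card_le n _
  have hcnt := pkcount_ins n σ
  by_cases hk : k = j
  · rw [if_pos hk]
    subst hk
    rw [← card_cond n σ]
    congr 1
    apply Finset.filter_congr
    intro pp _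
    rw [hcnt pp]
    by_cases hcond : ((pp:ℕ) = n ∨ (pp:ℕ) ∈ pkset n (wval n σ) ∨ (pp:ℕ)+1 ∈ pkset n (wval n σ))
    · simp [hcond, hj]
    · simp [hcond, hj]
  · rw [if_neg hk]
    by_cases hk1 : k = j + 1
    · rw [if_pos hk1]
      subst hk1
      have hcompl : (Finset.univ.filter fun pp : Fin (n+1) =>
          (pkset (n+1) (wval (n+1) (insPerm n σ pp))).card = j + 1)
          = Finset.univ.filter fun pp : Fin (n+1) =>
            ¬((pp:ℕ) = n ∨ (pp:ℕ) ∈ pkset n (wval n σ) ∨ (pp:ℕ)+1 ∈ pkset n (wval n σ)) := by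
        apply Finset.filter_congr
        intro pp _
        rw [hcnt pp]
        by_cases hcond : ((pp:ℕ) = n ∨ (pp:ℕ) ∈ pkset n (wval n σ) ∨ (pp:ℕ)+1 ∈ pkset n (wval n σ))
        · simp [hcond, hj]
        · simp [hcond, hj]
      rw [hcompl]
      have htot := Finset.card_filter_add_card_filter_not
        (s := (Finset.univ : Finset (Fin (n+1))))
        (p := fun pp : Fin (n+1) =>
          ((pp:ℕ) = n ∨ (pp:ℕ) ∈ pkset n (wval n σ) ∨ (pp:ℕ)+1 ∈ pkset n (wval n σ)))
      rw [card_cond n σ] at htot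
      simp only [Finset.card_univ, Fintype.card_fin] at htot
      omega
    · rw [if_neg hk1]
      rw [Finset.card_eq_zero, Finset.filter_eq_empty_iff]
      intro pp _
      rw [hcnt pp]
      by_cases hcond : ((pp:ℕ) = n ∨ (pp:ℕ) ∈ pkset n (wval n σ) ∨ (pp:ℕ)+1 ∈ pkset n (wval n σ))
      · simp [hcond]; omega
      · simp [hcond]; omega

lemma b_eq (n k : ℕ) :
    b n k = (Finset.univ.filter fun π : Equiv.Perm (Fin n) =>
      (pkset n (wval n π)).card = k).card := rfl

lemma b_eq_zero (n k : ℕ) (h : n < 2*k) : b n k = 0 := by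
  rw [b_eq, Finset.card_eq_zero, Finset.filter_eq_empty_iff]
  intro π _
  have := pkset_card_le n (wval n π)
  omega

lemma b_zero_succ (n : ℕ) : b (n+1) 0 = b n 0 := by
  rw [b_eq, b_eq]
  rw [card_filter_insPerm n (fun π => (pkset (n+1) (wval (n+1) π)).card = 0)]
  have : ∀ σ : Equiv.Perm (Fin n),
      (Finset.univ.filter fun pp : Fin (n+1) =>
        (pkset (n+1) (wval (n+1) (insPerm n σ pp))).card = 0).card
      = if (pkset n (wval n σ)).card = 0 then 2 * (pkset n (wval n σ)).card + 1 else 0 := by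
    intro σ
    rw [fiber_card n σ 0]
    by_cases h : (pkset n (wval n σ)).card = 0
    · rw [if_pos h.symm, if_pos h]
    · rw [if_neg (fun hh => h hh.symm), if_neg (by omega), if_neg h]
  calc ∑ σ : Equiv.Perm (Fin n), (Finset.univ.filter fun pp : Fin (n+1) =>
        (pkset (n+1) (wval (n+1) (insPerm n σ pp))).card = 0).card
      = ∑ σ : Equiv.Perm (Fin n),
          (if (pkset n (wval n σ)).card = 0 then 1 else 0) := by
        apply Finset.sum_congr rfl
        intro σ _
        rw [this σ]
        by_cases h : (pkset n (wval n σ)).card = 0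
        · rw [if_pos h, if_pos h, h]
        · rw [if_neg h, if_neg h]
    _ = (Finset.univ.filter fun σ : Equiv.Perm (Fin n) =>
          (pkset n (wval n σ)).card = 0).card := by
        rw [Finset.card_filter]

lemma b_succ_succ (n k : ℕ) :
    b (n+1) (k+1) = (2*(k+1)+1) * b n (k+1) + (n - 2*k) * b n k := by
  rw [b_eq, b_eq, b_eq]
  rw [card_filter_insPerm n (fun π => (pkset (n+1) (wval (n+1) π)).card = k+1)]
  have key : ∀ σ : Equiv.Perm (Fin n),
      (Finset.univ.filter fun pp : Fin (n+1) =>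
        (pkset (n+1) (wval (n+1) (insPerm n σ pp))).card = k+1).card
      = (if (pkset n (wval n σ)).card = k+1 then (2*(k+1)+1) else 0)
        + (if (pkset n (wval n σ)).card = k then (n - 2*k) else 0) := by
    intro σ
    rw [fiber_card n σ (k+1)]
    by_cases h1 : (pkset n (wval n σ)).card = k+1
    · rw [if_pos h1.symm, if_pos h1, if_neg (by omega), h1]
    · rw [if_neg (fun hh => h1 hh.symm), if_neg h1]
      by_cases h2 : (pkset n (wval n σ)).card = k
      · rw [if_pos (by omega), if_pos h2, h2]
        omega
      · rw [if_neg (by omega), if_neg h2]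
  rw [Finset.sum_congr rfl (fun σ _ => key σ), Finset.sum_add_distrib]
  congr 1
  · rw [← Finset.sum_filter, Finset.sum_const, smul_eq_mul, Nat.mul_comm]
  · rw [← Finset.sum_filter, Finset.sum_const, smul_eq_mul, Nat.mul_comm]

lemma b_zero_zero : b 0 0 = 1 := by
  rw [b_eq]
  rw [Finset.filter_true_of_mem]
  · simp
  · intro π _
    simp [pkset]

lemma term_step (c : ℝ) (k m : ℕ) :
    2*(X^2-1) * derivative (C c * ((X^2-1)^k * (2*X)^m)) + 2*X * (C c * ((X^2-1)^k * (2*X)^m))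
    = C (((2*k+1 : ℕ) : ℝ) * c) * ((X^2-1)^k * (2*X)^(m+1))
      + C (((4*m : ℕ) : ℝ) * c) * ((X^2-1)^(k+1) * (2*X)^(m-1)) := by
  have expand : ∀ a b : ℕ, True := fun _ _ => trivial
  match k, m with
  | 0, 0 =>
    simp only [derivative_mul, derivative_pow, derivative_C, derivative_X_pow, derivative_sub,
      derivative_one, derivative_ofNat, derivative_X, zero_mul, mul_zero, zero_add, add_zero,
      mul_one, sub_zero, Nat.add_sub_cancel, pow_zero, one_mul]
    simp only [C_mul, C_add, C_1, C_0, C_eq_natCast, map_ofNat]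
    push_cast
    ring
  | 0, m'+1 =>
    simp only [derivative_mul, derivative_pow, derivative_C, derivative_X_pow, derivative_sub,
      derivative_one, derivative_ofNat, derivative_X, zero_mul, mul_zero, zero_add, add_zero,
      mul_one, sub_zero, Nat.add_sub_cancel, pow_zero, one_mul]
    simp only [C_mul, C_add, C_1, C_0, C_eq_natCast, map_ofNat]
    push_cast
    ring
  | k'+1, 0 =>
    simp only [derivative_mul, derivative_pow, derivative_C, derivative_X_pow, derivative_sub,
      derivative_one, derivative_ofNat, derivative_X, zero_mul, mul_zero, zero_add, add_zero,
      mul_one, sub_zero, Nat.add_sub_cancel, pow_zero, one_mul]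
    simp only [C_mul, C_add, C_1, C_0, C_eq_natCast, map_ofNat]
    push_cast
    ring
  | k'+1, m'+1 =>
    simp only [derivative_mul, derivative_pow, derivative_C, derivative_X_pow, derivative_sub,
      derivative_one, derivative_ofNat, derivative_X, zero_mul, mul_zero, zero_add, add_zero,
      mul_one, sub_zero, Nat.add_sub_cancel, pow_zero, one_mul]
    simp only [C_mul, C_add, C_1, C_0, C_eq_natCast, map_ofNat]
    push_cast
    ring

lemma sum_drop (n m : ℕ) (h : n/2+1 ≤ m) :
    ∑ k ∈ Finset.range m, C ((4:ℝ)^k * (b n k : ℝ)) * ((X^2-1)^k * (2*X)^(n-2*k))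
      = ∑ k ∈ Finset.range (n/2+1), C ((4:ℝ)^k * (b n k : ℝ)) * ((X^2-1)^k * (2*X)^(n-2*k)) := by
  symm
  apply Finset.sum_subset (Finset.range_subset_range.mpr h)
  intro k _ hk
  simp only [Finset.mem_range, not_lt] at hk
  have hb : b n k = 0 := b_eq_zero n k (by omega)
  simp [hb]

lemma q_poly (n : ℕ) :
    q n = ∑ k ∈ Finset.range (n/2+1),
      C ((4:ℝ)^k * (b n k : ℝ)) * ((X^2-1)^k * (2*X)^(n-2*k)) := by
  induction n with
  | zero =>
    simp [q, b_zero_zero]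
  | succ n ih =>
    have hq : q (n+1) = 2 * (X^2 - 1) * derivative (q n) + 2 * X * q n := rfl
    rw [hq, ih]
    rw [derivative_sum, Finset.mul_sum, Finset.mul_sum, ← Finset.sum_add_distrib]
    have step : ∀ k ∈ Finset.range (n/2+1),
        2*(X^2-1) * derivative (C ((4:ℝ)^k * (b n k : ℝ)) * ((X^2-1)^k * (2*X)^(n-2*k)))
          + 2*X * (C ((4:ℝ)^k * (b n k : ℝ)) * ((X^2-1)^k * (2*X)^(n-2*k)))
        = C (((2*k+1 : ℕ) : ℝ) * ((4:ℝ)^k * (b n k : ℝ))) * ((X^2-1)^k * (2*X)^((n+1)-2*k))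
          + (fun j => if j = 0 then 0 else
              C (((4*(n-2*(j-1)) : ℕ) : ℝ) * ((4:ℝ)^(j-1) * (b n (j-1) : ℝ)))
                * ((X^2-1)^j * (2*X)^((n+1)-2*j))) (k+1) := by
      intro k hk
      simp only [Finset.mem_range] at hk
      rw [term_step]
      have e1 : n - 2*k + 1 = (n+1) - 2*k := by omega
      have e2 : n - 2*k - 1 = (n+1) - 2*(k+1) := by omega
      rw [e1, e2]
      simp only [Nat.add_sub_cancel, Nat.add_eq_zero, one_ne_zero, and_false, if_false]
    rw [Finset.sum_congr rfl step, Finset.sum_add_distrib]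
    set f : ℕ → Polynomial ℝ := fun j => if j = 0 then 0 else
        C (((4*(n-2*(j-1)) : ℕ) : ℝ) * ((4:ℝ)^(j-1) * (b n (j-1) : ℝ)))
          * ((X^2-1)^j * (2*X)^((n+1)-2*j)) with hf
    have hsum2 : ∑ k ∈ Finset.range (n/2+1), f (k+1) = ∑ j ∈ Finset.range (n/2+1+1), f j := by
      rw [Finset.sum_range_succ' f (n/2+1)]
      simp [hf]
    rw [hsum2]
    have hb : b n (n/2+1) = 0 := b_eq_zero n _ (by omega)
    have hsum1 : ∑ k ∈ Finset.range (n/2+1+1),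
        C (((2*k+1 : ℕ) : ℝ) * ((4:ℝ)^k * (b n k : ℝ))) * ((X^2-1)^k * (2*X)^((n+1)-2*k))
        = ∑ k ∈ Finset.range (n/2+1),
        C (((2*k+1 : ℕ) : ℝ) * ((4:ℝ)^k * (b n k : ℝ))) * ((X^2-1)^k * (2*X)^((n+1)-2*k)) := by
      rw [Finset.sum_range_succ, hb]
      simp only [Nat.cast_zero, mul_zero, map_zero, zero_mul, add_zero]
    rw [← hsum1, ← Finset.sum_add_distrib]
    have combine : ∀ k ∈ Finset.range (n/2+1+1),
        C (((2*k+1 : ℕ) : ℝ) * ((4:ℝ)^k * (b n k : ℝ))) * ((X^2-1)^k * (2*X)^((n+1)-2*k)) + f k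
        = C ((4:ℝ)^k * (b (n+1) k : ℝ)) * ((X^2-1)^k * (2*X)^((n+1)-2*k)) := by
      intro k _
      match k with
      | 0 =>
        simp only [hf, if_pos rfl, add_zero, pow_zero, Nat.mul_zero, Nat.zero_add,
          Nat.cast_one, one_mul, Nat.sub_zero]
        rw [b_zero_succ]
      | j+1 =>
        simp only [hf, Nat.add_eq_zero, one_ne_zero, and_false, if_false, Nat.add_sub_cancel]
        rw [← add_mul, ← C_add]
        congr 2
        rw [b_succ_succ]
        push_cast
        ring
    rw [Finset.sum_congr rfl combine]
    rw [sum_drop (n+1) (n/2+1+1) (by omega)]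


theorem q_eq_gamma_expansion (n : ℕ) (hn : 1 ≤ n) (x : ℝ) :
    (q n).eval x =
      ∑ k ∈ Finset.range (n / 2 + 1),
        (4 : ℝ) ^ k * (b n k : ℝ) * (x ^ 2 - 1) ^ k * (2 * x) ^ (n - 2 * k) := by
  rw [q_poly n, Polynomial.eval_finset_sum]
  apply Finset.sum_congr rfl
  intro k _
  simp only [eval_mul, eval_pow, eval_C, eval_X, eval_sub, eval_one, eval_ofNat]
  ring
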